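/- Let m = n = 2, 0 < τ < 1/2, λ > 1 with 1 - 2τ + 10λτ ≤ λ, and set r = 1 - 2τ + 6λτ. For the exponentially λ-equivariant 2×2 template f with δ(f,t) = 2 for 1 < t < r and δ(f,t) = 3 for r < t < λ (extended λ-equivariantly), the lower average contraction rate equals 3 - (6λτ - 2τ)/((1 - λ⁻¹)(1 - 2τ + 6λτ)); in particular δ̲(f) = 3 - Θ(τ) as τ → 0 for fixed λ. -/

import Mathlib

open Filter

/-- The contraction-rate function of the exponentially `λ`-equivariant `2×2` template:
`δ(f,t) = 2` for `1 < t < r`, `δ(f,t) = 3` for `r < t < λ`, extended so that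
`δ(f,λt) = δ(f,t)` for all `t > 0`. -/
noncomputable def deltaFun (lam r : ℝ) (t : ℝ) : ℝ :=
  if t ≤ 0 then 3
  else if t / lam ^ ⌊Real.logb lam t⌋ < r then 2 else 3

section
open Filter MeasureTheory Set intervalIntegral

namespace TwoByTwoAux

noncomputable def Fint (lam r T : ℝ) : ℝ := ∫ t in (0:ℝ)..T, deltaFun lam r t

lemma delta_measurable (lam r : ℝ) : Measurable (deltaFun lam r) := by
  unfold deltaFun
  refine Measurable.ite (measurableSet_le measurable_id measurable_const) measurable_const ?_
  refine Measurable.ite (measurableSet_lt ?_ measurable_const) measurable_const measurable_const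
  refine measurable_id.div ?_
  refine (measurable_of_countable (fun n : ℤ => lam ^ n)).comp (Measurable.floor ?_)
  exact (Real.measurable_log.div_const (Real.log lam))

lemma delta_nonneg (lam r t : ℝ) : 0 ≤ deltaFun lam r t := by
  unfold deltaFun; split_ifs <;> norm_num

lemma delta_le_three (lam r t : ℝ) : deltaFun lam r t ≤ 3 := by
  unfold deltaFun; split_ifs <;> norm_num

lemma delta_intble (lam r a b : ℝ) : IntervalIntegrable (deltaFun lam r) volume a b := by
  refine IntervalIntegrable.mono_fun' (g := fun _ => (3:ℝ)) intervalIntegrable_const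
    ((delta_measurable lam r).aestronglyMeasurable.restrict) ?_
  refine ae_of_all _ fun x => ?_
  show ‖deltaFun lam r x‖ ≤ (3:ℝ)
  rw [Real.norm_eq_abs, abs_of_nonneg (delta_nonneg lam r x)]
  exact delta_le_three lam r x

lemma delta_scale {lam : ℝ} (hlam : 1 < lam) (r s : ℝ) :
    deltaFun lam r (lam * s) = deltaFun lam r s := by
  have h0 : (0:ℝ) < lam := lt_trans one_pos hlam
  by_cases hs : s ≤ 0
  · have h1 : lam * s ≤ 0 := mul_nonpos_of_nonneg_of_nonpos h0.le hs
    unfold deltaFun; rw [if_pos h1, if_pos hs]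
  · push_neg at hs
    have h1 : ¬ lam * s ≤ 0 := not_le.2 (mul_pos h0 hs)
    unfold deltaFun
    rw [if_neg h1, if_neg (not_le.2 hs)]
    have hlog : Real.logb lam (lam * s) = Real.logb lam s + 1 := by
      rw [Real.logb_mul (ne_of_gt h0) (ne_of_gt hs), Real.logb_self_eq_one hlam]
      ring
    have hfloor : ⌊Real.logb lam (lam * s)⌋ = ⌊Real.logb lam s⌋ + 1 := by
      rw [hlog]
      exact_mod_cast Int.floor_add_intCast (Real.logb lam s) 1
    rw [hfloor]
    have hz : lam ^ (⌊Real.logb lam s⌋ + 1) = lam ^ ⌊Real.logb lam s⌋ * lam := by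
      rw [zpow_add₀ (ne_of_gt h0), zpow_one]
    have hzn : lam ^ ⌊Real.logb lam s⌋ ≠ 0 := zpow_ne_zero _ (ne_of_gt h0)
    have hdiv : lam * s / lam ^ (⌊Real.logb lam s⌋ + 1) = s / lam ^ ⌊Real.logb lam s⌋ := by
      rw [hz]
      field_simp
    rw [hdiv]

lemma delta_eq_base {lam : ℝ} (hlam : 1 < lam) (r : ℝ) {t : ℝ} (h1 : 1 ≤ t) (h2 : t < lam) :
    deltaFun lam r t = if t < r then 2 else 3 := by
  have ht0 : 0 < t := lt_of_lt_of_le one_pos h1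
  have hfl : ⌊Real.logb lam t⌋ = 0 := by
    rw [Int.floor_eq_zero_iff]
    refine ⟨Real.logb_nonneg hlam h1, ?_⟩
    calc Real.logb lam t < Real.logb lam lam := Real.logb_lt_logb hlam ht0 h2
    _ = 1 := Real.logb_self_eq_one hlam
  unfold deltaFun
  rw [if_neg (not_le.2 ht0), hfl]
  norm_num

lemma delta_eq_prev {lam : ℝ} (hlam : 1 < lam) (r : ℝ) {t : ℝ} (h1 : lam⁻¹ ≤ t) (h2 : t < 1) :
    deltaFun lam r t = if lam * t < r then 2 else 3 := by
  have h0 : (0:ℝ) < lam := lt_trans one_pos hlam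
  have h1' : 1 ≤ lam * t := by
    have := mul_le_mul_of_nonneg_left h1 h0.le
    rwa [mul_inv_cancel₀ (ne_of_gt h0)] at this
  have h2' : lam * t < lam := by nlinarith
  rw [← delta_scale hlam r t, delta_eq_base hlam r h1' h2']

lemma integral_of_Ioo {f : ℝ → ℝ} {a b c : ℝ} (hab : a ≤ b)
    (h : ∀ x ∈ Set.Ioo a b, f x = c) : ∫ t in a..b, f t = c * (b - a) := by
  rw [intervalIntegral.integral_of_le hab, MeasureTheory.integral_Ioc_eq_integral_Ioo,
    MeasureTheory.setIntegral_congr_fun measurableSet_Ioo h]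
  simp [Real.volume_Ioo, ENNReal.toReal_ofReal (sub_nonneg.2 hab), mul_comm, hab]

lemma Fint_scale {lam : ℝ} (hlam : 1 < lam) (r T : ℝ) :
    Fint lam r (lam * T) = lam * Fint lam r T := by
  have h0 : lam ≠ 0 := ne_of_gt (lt_trans one_pos hlam)
  have h := intervalIntegral.integral_comp_mul_left (a := (0:ℝ)) (b := T)
    (fun t => deltaFun lam r t) h0
  simp only [delta_scale hlam r, mul_zero, smul_eq_mul] at h
  unfold Fint
  rw [h]
  field_simp

lemma Fint_scale_pow {lam : ℝ} (hlam : 1 < lam) (r : ℝ) (n : ℕ) (T : ℝ) :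
    Fint lam r (lam ^ n * T) = lam ^ n * Fint lam r T := by
  induction n with
  | zero => simp
  | succ n ih =>
      have : lam ^ (n + 1) * T = lam * (lam ^ n * T) := by ring
      rw [this, Fint_scale hlam, ih, pow_succ]
      ring

lemma Fint_add (lam r a b : ℝ) : Fint lam r b = Fint lam r a + ∫ t in a..b, deltaFun lam r t := by
  unfold Fint
  rw [intervalIntegral.integral_add_adjacent_intervals (delta_intble lam r 0 a)
    (delta_intble lam r a b)]

end TwoByTwoAux

end

set_option maxHeartbeats 2000000 in
open Filter MeasureTheory Set intervalIntegral TwoByTwoAux in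
/-- For `m = n = 2`, `0 < τ < 1/2`, `λ > 1` with `1 - 2τ + 10λτ ≤ λ`, and
`r = 1 - 2τ + 6λτ`, the lower average contraction rate
`δ̲(f) = liminf_{T→∞} (1/T)∫₀^T δ(f,t) dt` of the exponentially `λ`-equivariant `2×2`
template with `δ(f,·) = 2` on `(1,r)` and `= 3` on `(r,λ)` equals
`3 - (6λτ - 2τ)/((1 - λ⁻¹)(1 - 2τ + 6λτ))`; in particular `δ̲(f) = 3 - Θ(τ)`
as `τ → 0` for fixed `λ`. -/
theorem twoByTwo_lower_contraction_rate (τ lam : ℝ)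
    (hτ0 : 0 < τ) (hτ1 : τ < 1 / 2) (hlam : 1 < lam)
    (hcompat : 1 - 2 * τ + 10 * lam * τ ≤ lam) :
    liminf (fun T : ℝ =>
        (1 / T) * ∫ t in (0:ℝ)..T, deltaFun lam (1 - 2 * τ + 6 * lam * τ) t) atTop =
      3 - (6 * lam * τ - 2 * τ) / ((1 - lam⁻¹) * (1 - 2 * τ + 6 * lam * τ)) := by
  have h0 : (0:ℝ) < lam := lt_trans one_pos hlam
  have hlne : lam ≠ 0 := ne_of_gt h0
  set r : ℝ := 1 - 2 * τ + 6 * lam * τ with hrdef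
  have hr1 : 1 < r := by rw [hrdef]; nlinarith
  have hrlam : r < lam := by rw [hrdef]; nlinarith
  have hr0 : (0:ℝ) < r := lt_trans one_pos hr1
  have hrw : (fun T : ℝ => (1 / T) * ∫ t in (0:ℝ)..T, deltaFun lam r t)
      = fun T : ℝ => (1 / T) * Fint lam r T := rfl
  rw [hrw]
  -- basic piece integrals
  have hinvr1 : lam⁻¹ * r < 1 := by
    have := mul_lt_mul_of_pos_left hrlam (inv_pos.2 h0)
    rwa [inv_mul_cancel₀ hlne] at this
  have hinvpos : (0:ℝ) < lam⁻¹ := inv_pos.2 h0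
  have hI1 : ∫ t in lam⁻¹..(lam⁻¹ * r), deltaFun lam r t = 2 * (lam⁻¹ * r - lam⁻¹) := by
    refine integral_of_Ioo (by nlinarith) fun x hx => ?_
    obtain ⟨hx1, hx2⟩ := hx
    rw [delta_eq_prev hlam r hx1.le (lt_trans hx2 hinvr1), if_pos ?_]
    have := mul_lt_mul_of_pos_left hx2 h0
    rwa [← mul_assoc, mul_inv_cancel₀ hlne, one_mul] at this
  have hI2 : ∫ t in (lam⁻¹ * r)..(1:ℝ), deltaFun lam r t = 3 * (1 - lam⁻¹ * r) := by
    refine integral_of_Ioo hinvr1.le fun x hx => ?_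
    obtain ⟨hx1, hx2⟩ := hx
    have hx1' : lam⁻¹ ≤ x := le_trans (by nlinarith) hx1.le
    rw [delta_eq_prev hlam r hx1' hx2, if_neg ?_]
    have := mul_lt_mul_of_pos_left hx1 h0
    rw [← mul_assoc, mul_inv_cancel₀ hlne, one_mul] at this
    exact not_lt.2 this.le
  have hadd1 : Fint lam r 1 = Fint lam r lam⁻¹ +
      (2 * (lam⁻¹ * r - lam⁻¹) + 3 * (1 - lam⁻¹ * r)) := by
    have hsplit : (∫ t in lam⁻¹..(lam⁻¹ * r), deltaFun lam r t)
        + ∫ t in (lam⁻¹ * r)..(1:ℝ), deltaFun lam r t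
        = ∫ t in lam⁻¹..(1:ℝ), deltaFun lam r t :=
      intervalIntegral.integral_add_adjacent_intervals (delta_intble _ _ _ _)
        (delta_intble _ _ _ _)
    rw [Fint_add lam r lam⁻¹ 1, ← hsplit, hI1, hI2]
  have hscale1 : Fint lam r 1 = lam * Fint lam r lam⁻¹ := by
    have := Fint_scale hlam r lam⁻¹
    rwa [mul_inv_cancel₀ hlne] at this
  have hinv : lam * lam⁻¹ = 1 := mul_inv_cancel₀ hlne
  have hF1 : (lam - 1) * Fint lam r 1 = 3 * lam - r - 2 := by
    have h2 : lam * Fint lam r 1 = lam * Fint lam r lam⁻¹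
        + lam * (2 * (lam⁻¹ * r - lam⁻¹) + 3 * (1 - lam⁻¹ * r)) := by
      rw [hadd1]; ring
    rw [← hscale1] at h2
    linear_combination h2 - (r + 2) * hinv
  have hJ1 : ∀ T, 1 ≤ T → T ≤ r → Fint lam r T = Fint lam r 1 + 2 * (T - 1) := by
    intro T h1 h2
    have hint : ∫ t in (1:ℝ)..T, deltaFun lam r t = 2 * (T - 1) := by
      refine integral_of_Ioo h1 fun x hx => ?_
      rw [delta_eq_base hlam r hx.1.le (lt_of_lt_of_le (lt_of_lt_of_le hx.2 h2) hrlam.le),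
        if_pos (lt_of_lt_of_le hx.2 h2)]
    rw [Fint_add lam r 1 T, hint]
  have hFr : Fint lam r r = Fint lam r 1 + 2 * (r - 1) := hJ1 r hr1.le le_rfl
  have hJ2 : ∀ T, r ≤ T → T ≤ lam → Fint lam r T = Fint lam r r + 3 * (T - r) := by
    intro T h1 h2
    have hint : ∫ t in r..T, deltaFun lam r t = 3 * (T - r) := by
      refine integral_of_Ioo h1 fun x hx => ?_
      rw [delta_eq_base hlam r (le_trans hr1.le hx.1.le) (lt_of_lt_of_le hx.2 h2),
        if_neg (not_lt.2 hx.1.le)]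
    rw [Fint_add lam r r T, hint]
  set K : ℝ := Fint lam r r / r with hKdef
  have hF1ge2 : 2 ≤ Fint lam r 1 := by nlinarith [hF1, hrlam]
  have hF1le : Fint lam r 1 ≤ r + 2 := by nlinarith [hF1, mul_pos h0 (sub_pos.2 hr1)]
  have hFr3 : Fint lam r r ≤ 3 * r := by linarith [hFr, hF1le]
  have base : ∀ T, 1 ≤ T → T ≤ lam → K * T ≤ Fint lam r T := by
    intro T h1 h2
    rw [hKdef, div_mul_eq_mul_div, div_le_iff₀ hr0]
    by_cases hTr : T ≤ r
    · rw [hJ1 T h1 hTr, hFr]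
      nlinarith [mul_nonneg (by linarith : (0:ℝ) ≤ Fint lam r 1 - 2)
        (by linarith : (0:ℝ) ≤ r - T)]
    · push_neg at hTr
      rw [hJ2 T hTr.le h2]
      nlinarith [mul_nonneg (by linarith : (0:ℝ) ≤ 3 * r - Fint lam r r)
        (by linarith : (0:ℝ) ≤ T - r)]
  have lb : ∀ n : ℕ, ∀ T, 1 ≤ T → T ≤ lam ^ n → K * T ≤ Fint lam r T := by
    intro n
    induction n with
    | zero =>
        intro T h1 h2
        rw [pow_zero] at h2
        exact base T h1 (le_trans h2 hlam.le)
    | succ n ih =>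
        intro T h1 h2
        by_cases hTl : T ≤ lam
        · exact base T h1 hTl
        · push_neg at hTl
          have h1' : 1 ≤ T / lam := by rw [le_div_iff₀ h0]; linarith
          have h2' : T / lam ≤ lam ^ n := by
            rw [div_le_iff₀ h0]; rw [pow_succ] at h2; exact h2
          have hrec := ih (T / lam) h1' h2'
          have hT : lam * (T / lam) = T := by field_simp
          have hFs : Fint lam r T = lam * Fint lam r (T / lam) := by
            have := Fint_scale hlam r (T / lam)
            rwa [hT] at this
          rw [hFs]
          calc K * T = lam * (K * (T / lam)) := by rw [mul_left_comm lam K, hT]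
          _ ≤ lam * Fint lam r (T / lam) := mul_le_mul_of_nonneg_left hrec h0.le
  have hev : ∀ᶠ T in atTop, K ≤ (1 / T) * Fint lam r T := by
    filter_upwards [eventually_ge_atTop (1:ℝ)] with T hT
    obtain ⟨n, hn⟩ := pow_unbounded_of_one_lt T hlam
    have hT0 : (0:ℝ) < T := lt_of_lt_of_le one_pos hT
    have hlbT := lb n T hT hn.le
    rw [one_div, ← div_eq_inv_mul, le_div_iff₀ hT0]
    linarith
  have hfreq : ∃ᶠ T in atTop, (1 / T) * Fint lam r T ≤ K := by
    rw [frequently_atTop]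
    intro a
    obtain ⟨n, hn⟩ := pow_unbounded_of_one_lt a hlam
    have hp : (0:ℝ) < lam ^ n := pow_pos h0 n
    refine ⟨lam ^ n * r, ?_, ?_⟩
    · nlinarith [hn, mul_pos hp (sub_pos.2 hr1)]
    · rw [Fint_scale_pow hlam r n r]
      have heq : 1 / (lam ^ n * r) * (lam ^ n * Fint lam r r) = K := by
        rw [hKdef]; field_simp
      rw [heq]
  have hbdd : IsBoundedUnder (· ≥ ·) atTop (fun T => (1 / T) * Fint lam r T) :=
    ⟨K, by simpa only [eventually_map] using hev⟩
  have hub3 : ∀ᶠ T in atTop, (1 / T) * Fint lam r T ≤ 3 := by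
    filter_upwards [eventually_ge_atTop (1:ℝ)] with T hT
    have hT0 : (0:ℝ) < T := lt_of_lt_of_le one_pos hT
    have hle : Fint lam r T ≤ 3 * T := by
      have h3 : ∫ _t in (0:ℝ)..T, (3:ℝ) = 3 * T := by simp [mul_comm]
      calc Fint lam r T ≤ ∫ _t in (0:ℝ)..T, (3:ℝ) :=
            intervalIntegral.integral_mono_on (by linarith) (delta_intble lam r 0 T)
              intervalIntegrable_const (fun x _ => delta_le_three lam r x)
      _ = 3 * T := h3
    rw [one_div, ← div_eq_inv_mul, div_le_iff₀ hT0]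
    linarith
  have hcob : IsCoboundedUnder (· ≥ ·) atTop (fun T => (1 / T) * Fint lam r T) :=
    isCoboundedUnder_ge_of_eventually_le _ hub3
  have hK : liminf (fun T => (1 / T) * Fint lam r T) atTop = K :=
    le_antisymm (liminf_le_of_frequently_le hfreq hbdd) (le_liminf_of_le hcob hev)
  rw [hK]
  have hlam1 : lam - 1 ≠ 0 := sub_ne_zero.2 (ne_of_gt hlam)
  have hFrval : (lam - 1) * Fint lam r r = 2 * r * lam - 3 * r + lam := by
    linear_combination hF1 + (lam - 1) * hFr
  have hFrv2 : Fint lam r r = (2 * r * lam - 3 * r + lam) / (lam - 1) := by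
    rw [eq_div_iff hlam1]; linear_combination hFrval
  have hrne : r ≠ 0 := ne_of_gt hr0
  have h1l : (1:ℝ) - lam⁻¹ ≠ 0 := by
    intro h
    have : lam⁻¹ = 1 := by linarith [sub_eq_zero.1 h]
    rw [inv_eq_one] at this
    exact (ne_of_gt hlam) this
  rw [hKdef, hFrv2, hrdef]
  have hrne' : (1:ℝ) - 2 * τ + 6 * lam * τ ≠ 0 := by rw [← hrdef]; exact hrne
  have e : (1:ℝ) - lam⁻¹ = (lam - 1) / lam := by field_simp
  rw [e, div_div, div_mul_eq_mul_div, div_div_eq_mul_div, eq_sub_iff_add_eq, ← add_div, div_eq_iff (mul_ne_zero hlam1 hrne')]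
  ring
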